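/- arXiv:1308.4308 — 2 statements merged into one kernel-verified Lean document; each statement's English description precedes it below -/
import Mathlib

section
/- Let W be a tree (a finite connected acyclic simple graph) on the vertex set {1,…,k}. Then P_W = I_{W*}: under the identification of the variables of S with the edges of the prism W* given by x_{ij} ↔ {p_i,p_j}, x_{ji} ↔ {q_i,q_j} for each edge {i,j} of W with i<j, and x_{ii} ↔ {p_i,q_i} for each vertex i, the ideal P_W equals the kernel of the K-algebra homomorphism from S to K[t_{p_1},…,t_{p_k},t_{q_1},…,t_{q_k}] sending x_{ij} ↦ t_{p_i}t_{p_j}, x_{ji} ↦ t_{q_i}t_{q_j}, and x_{ii} ↦ t_{p_i}t_{q_i}. -/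
open MvPolynomial

/-- The set of variables of `S`: one variable `x_{ii}` for each vertex `i` of `W` and two
variables `x_{ij}`, `x_{ji}` for each edge `{i,j}` of `W`. -/
abbrev VarSet (k : ℕ) (W : SimpleGraph (Fin k)) : Type :=
  {p : Fin k × Fin k // p.1 = p.2 ∨ W.Adj p.1 p.2}

/-- The diagonal 2-minor `f_{ij} = x_{ii} x_{jj} - x_{ij} x_{ji}`. -/
noncomputable def fij (K : Type) [Field K] {k : ℕ} {W : SimpleGraph (Fin k)}
    {i j : Fin k} (h : W.Adj i j) : MvPolynomial (VarSet k W) K :=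
  X ⟨(i, i), Or.inl rfl⟩ * X ⟨(j, j), Or.inl rfl⟩ -
    X ⟨(i, j), Or.inr h⟩ * X ⟨(j, i), Or.inr h.symm⟩

/-- The ideal `P_W` generated by the diagonal 2-minors `f_{ij}` for edges `{i,j}`, `i < j`. -/
noncomputable def PG (K : Type) [Field K] (k : ℕ) (W : SimpleGraph (Fin k)) :
    Ideal (MvPolynomial (VarSet k W) K) :=
  Ideal.span {f | ∃ i j : Fin k, ∃ h : W.Adj i j, i < j ∧ f = fij K h}

/-- The `K`-algebra homomorphism from `S` to `K[t_{p_1},…,t_{p_k},t_{q_1},…,t_{q_k}]`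
(where `t_{p_i}` is the variable `X (Sum.inl i)` and `t_{q_i}` is `X (Sum.inr i)`) sending
`x_{ij} ↦ t_{p_i} t_{p_j}`, `x_{ji} ↦ t_{q_i} t_{q_j}` (for each edge `{i,j}` of `W` with
`i < j`) and `x_{ii} ↦ t_{p_i} t_{q_i}`; its kernel is the toric ideal `I_{W*}` of the prism
`W*` under the variable–edge identification `x_{ij} ↔ {p_i,p_j}`, `x_{ji} ↔ {q_i,q_j}`,
`x_{ii} ↔ {p_i,q_i}`. -/
noncomputable def prismMap (K : Type) [Field K] (k : ℕ) (W : SimpleGraph (Fin k)) :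
    MvPolynomial (VarSet k W) K →ₐ[K] MvPolynomial (Fin k ⊕ Fin k) K :=
  aeval fun v =>
    if v.1.1 = v.1.2 then X (Sum.inl v.1.1) * X (Sum.inr v.1.1)
    else if v.1.1 < v.1.2 then X (Sum.inl v.1.1) * X (Sum.inl v.1.2)
    else X (Sum.inr v.1.1) * X (Sum.inr v.1.2)

open scoped Classical

namespace PrismAux

variable {k : ℕ} {W : SimpleGraph (Fin k)}

/-- the diagonal variable x_{ii} -/
def vii (W : SimpleGraph (Fin k)) (i : Fin k) : VarSet k W := ⟨(i, i), Or.inl rfl⟩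

/-- the "p-side" variable of an edge -/
def pvar {i j : Fin k} (h : W.Adj i j) : VarSet k W :=
  if i < j then ⟨(i, j), Or.inr h⟩ else ⟨(j, i), Or.inr h.symm⟩

/-- the "q-side" variable of an edge -/
def qvar {i j : Fin k} (h : W.Adj i j) : VarSet k W :=
  if i < j then ⟨(j, i), Or.inr h.symm⟩ else ⟨(i, j), Or.inr h⟩

/-- the exponent vector of the image of a variable -/
noncomputable def wt (v : VarSet k W) : Fin k ⊕ Fin k →₀ ℕ :=
  if v.1.1 = v.1.2 then
    Finsupp.single (Sum.inl v.1.1) 1 + Finsupp.single (Sum.inr v.1.1) 1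
  else if v.1.1 < v.1.2 then
    Finsupp.single (Sum.inl v.1.1) 1 + Finsupp.single (Sum.inl v.1.2) 1
  else Finsupp.single (Sum.inr v.1.1) 1 + Finsupp.single (Sum.inr v.1.2) 1

lemma wt_vii (i : Fin k) :
    wt (vii W i) = Finsupp.single (Sum.inl i) 1 + Finsupp.single (Sum.inr i) 1 := by
  simp [wt, vii]

lemma wt_pvar {i j : Fin k} (h : W.Adj i j) :
    wt (pvar h) = Finsupp.single (Sum.inl i) 1 + Finsupp.single (Sum.inl j) 1 := by
  rcases lt_or_gt_of_ne h.ne with hlt | hgt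
  · simp [wt, pvar, hlt, h.ne, hlt.not_gt]
  · simp [wt, pvar, hgt, h.ne', hgt.not_gt, hgt, add_comm]

lemma wt_qvar {i j : Fin k} (h : W.Adj i j) :
    wt (qvar h) = Finsupp.single (Sum.inr i) 1 + Finsupp.single (Sum.inr j) 1 := by
  rcases lt_or_gt_of_ne h.ne with hlt | hgt
  · simp [wt, qvar, hlt, h.ne', hlt.not_gt, hlt, add_comm]
  · simp [wt, qvar, hgt, h.ne, hgt.not_gt]

/-- the multidegree map -/
noncomputable def Dm (u : VarSet k W →₀ ℕ) : Fin k ⊕ Fin k →₀ ℕ :=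
  u.sum fun v n => n • wt v

lemma Dm_zero : Dm (0 : VarSet k W →₀ ℕ) = 0 := Finsupp.sum_zero_index

lemma Dm_add (u u' : VarSet k W →₀ ℕ) : Dm (u + u') = Dm u + Dm u' :=
  Finsupp.sum_add_index' (fun _ => zero_smul _ _) (fun _ m n => add_smul m n _)

lemma Dm_single (v : VarSet k W) (n : ℕ) : Dm (Finsupp.single v n) = n • wt v :=
  Finsupp.sum_single_index (zero_smul _ _)

end PrismAux

namespace PrismAux

variable {K : Type} [Field K] {k : ℕ} {W : SimpleGraph (Fin k)}

lemma prismMap_X (v : VarSet k W) :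
    prismMap K k W (X v) = monomial (wt v) (1 : K) := by
  show (aeval _) (X v) = _
  rw [aeval_X]
  unfold wt
  split_ifs <;>
    rw [X, X, monomial_mul, one_mul]

lemma prismMap_monomial (u : VarSet k W →₀ ℕ) :
    prismMap K k W (monomial u (1 : K)) = monomial (Dm u) 1 := by
  induction u using Finsupp.induction with
  | zero => simp [Dm_zero, monomial_zero']
  | single_add v n u hvu hn ih =>
    have : monomial (Finsupp.single v n + u) (1 : K) =
        monomial (Finsupp.single v n) 1 * monomial u 1 := by
      rw [monomial_mul, one_mul]
    rw [this, map_mul, ih, ← X_pow_eq_monomial, map_pow, prismMap_X,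
      monomial_pow, one_pow, monomial_mul, one_mul, Dm_add, Dm_single]

/-- total degree of an exponent vector -/
def tot {α : Type*} (u : α →₀ ℕ) : ℕ := u.sum fun _ n => n

lemma tot_add {α : Type*} (u u' : α →₀ ℕ) : tot (u + u') = tot u + tot u' :=
  Finsupp.sum_add_index' (fun _ => rfl) (fun _ _ _ => rfl)

lemma tot_single {α : Type*} (a : α) (n : ℕ) : tot (Finsupp.single a n) = n :=
  Finsupp.sum_single_index rfl

lemma tot_smul {α : Type*} (n : ℕ) (u : α →₀ ℕ) : tot (n • u) = n * tot u := by
  induction n with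
  | zero => simp [tot]
  | succ m ih =>
    rw [succ_nsmul, tot_add, ih, Nat.succ_mul]

lemma tot_wt (v : VarSet k W) : tot (wt v) = 2 := by
  unfold wt
  split_ifs <;> rw [tot_add, tot_single, tot_single]

lemma tot_Dm (u : VarSet k W →₀ ℕ) : tot (Dm u) = 2 * tot u := by
  induction u using Finsupp.induction with
  | zero => simp [Dm_zero, tot]
  | single_add v n u hvu hn ih =>
    rw [Dm_add, Dm_single, tot_add, tot_add, tot_single, ih, tot_smul, tot_wt]
    ring

lemma Dm_apply (u : VarSet k W →₀ ℕ) (a : Fin k ⊕ Fin k) :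
    Dm u a = u.sum fun v n => n * wt v a := by
  rw [Dm, Finsupp.sum_apply]
  exact Finsupp.sum_congr fun v _ => by rw [Finsupp.smul_apply, smul_eq_mul]

lemma sub_single_add (u : VarSet k W →₀ ℕ) (v : VarSet k W) (h : 0 < u v) :
    (u - Finsupp.single v 1) + Finsupp.single v 1 = u := by
  ext a
  rw [Finsupp.add_apply, Finsupp.tsub_apply]
  rcases eq_or_ne a v with rfl | hne
  · rw [Finsupp.single_eq_same]; omega
  · rw [Finsupp.single_eq_of_ne' hne.symm]; omega

lemma fij_mem {i j : Fin k} (h : W.Adj i j) : fij K h ∈ PG K k W := by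
  rcases lt_or_gt_of_ne h.ne with hlt | hgt
  · exact Ideal.subset_span ⟨i, j, h, hlt, rfl⟩
  · have : fij K h = fij K h.symm := by unfold fij; ring_nf
    rw [this]
    exact Ideal.subset_span ⟨j, i, h.symm, hgt, rfl⟩

end PrismAux

namespace PrismAux

variable {K : Type} [Field K] {k : ℕ} {W : SimpleGraph (Fin k)}

lemma wt_inl_ne (v : VarSet k W) (i : Fin k) (h1 : v.1.1 ≠ i) (h2 : v.1.2 ≠ i) :
    wt v (Sum.inl i) = 0 := by
  unfold wt
  split_ifs <;> simp [Finsupp.single_apply, h1, h2]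

lemma wt_inr_ne (v : VarSet k W) (i : Fin k) (h1 : v.1.1 ≠ i) (h2 : v.1.2 ≠ i) :
    wt v (Sum.inr i) = 0 := by
  unfold wt
  split_ifs <;> simp [Finsupp.single_apply, h1, h2]

lemma vii_ne_pvar {i j : Fin k} (hij : W.Adj i j) (m : Fin k) : vii W m ≠ pvar hij := by
  unfold vii pvar
  split_ifs <;> simp [Subtype.ext_iff, Prod.ext_iff] <;> rintro rfl <;>
    exact fun h => hij.ne (by omega)

lemma vii_ne_qvar {i j : Fin k} (hij : W.Adj i j) (m : Fin k) : vii W m ≠ qvar hij := by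
  unfold vii qvar
  split_ifs <;> simp [Subtype.ext_iff, Prod.ext_iff] <;> rintro rfl <;>
    exact fun h => hij.ne (by omega)

lemma pvar_ne_qvar {i j : Fin k} (hij : W.Adj i j) : pvar hij ≠ qvar hij := by
  unfold pvar qvar
  split_ifs <;> simp [Subtype.ext_iff, Prod.ext_iff] <;> rintro rfl <;>
    exact fun _ => hij.ne rfl

lemma sum_indicator (u : VarSet k W →₀ ℕ) (c : VarSet k W) :
    (∑ v ∈ u.support, if v = c then u v else 0) = u c := by
  rw [Finset.sum_ite_eq' u.support c u]
  split_ifs with h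
  · rfl
  · exact (Finsupp.notMem_support_iff.mp h).symm

lemma Dm_leaf (u : VarSet k W →₀ ℕ) {i j : Fin k} (hij : W.Adj i j)
    (hs : ∀ v ∈ u.support, (v.1.1 = i ∨ v.1.2 = i) →
      v = vii W i ∨ v = pvar hij ∨ v = qvar hij) :
    Dm u (Sum.inl i) = u (vii W i) + u (pvar hij) ∧
    Dm u (Sum.inr i) = u (vii W i) + u (qvar hij) := by
  have hij' : j ≠ i := hij.ne'
  constructor
  · rw [Dm_apply, Finsupp.sum]
    have : ∀ v ∈ u.support,
        u v * wt v (Sum.inl i) =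
          (if v = vii W i then u v else 0) + (if v = pvar hij then u v else 0) := by
      intro v hv
      by_cases hto : v.1.1 = i ∨ v.1.2 = i
      · rcases hs v hv hto with h | h | h <;> subst h
        · rw [wt_vii, if_pos rfl, if_neg (vii_ne_pvar hij i)]
          simp [Finsupp.single_apply]
        · rw [wt_pvar, if_neg (Ne.symm (vii_ne_pvar hij i)), if_pos rfl]
          simp [Finsupp.single_apply, hij']
        · rw [wt_qvar, if_neg (Ne.symm (vii_ne_qvar hij i)),
            if_neg (Ne.symm (pvar_ne_qvar hij))]
          simp [Finsupp.single_apply]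
      · push_neg at hto
        rw [wt_inl_ne v i hto.1 hto.2, mul_zero,
          if_neg (fun h => hto.1 (by rw [h]; rfl)), if_neg, add_zero]
        intro h
        subst h
        unfold pvar at hto
        split_ifs at hto <;> simp at hto <;> omega
    rw [Finset.sum_congr rfl this, Finset.sum_add_distrib, sum_indicator, sum_indicator]
  · rw [Dm_apply, Finsupp.sum]
    have : ∀ v ∈ u.support,
        u v * wt v (Sum.inr i) =
          (if v = vii W i then u v else 0) + (if v = qvar hij then u v else 0) := by
      intro v hv
      by_cases hto : v.1.1 = i ∨ v.1.2 = i
      · rcases hs v hv hto with h | h | h <;> subst h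
        · rw [wt_vii, if_pos rfl, if_neg (vii_ne_qvar hij i)]
          simp [Finsupp.single_apply]
        · rw [wt_pvar, if_neg (Ne.symm (vii_ne_pvar hij i)), if_neg (pvar_ne_qvar hij)]
          simp [Finsupp.single_apply]
        · rw [wt_qvar, if_neg (Ne.symm (vii_ne_qvar hij i)), if_pos rfl]
          simp [Finsupp.single_apply, hij']
      · push_neg at hto
        rw [wt_inr_ne v i hto.1 hto.2, mul_zero,
          if_neg (fun h => hto.1 (by rw [h]; rfl)), if_neg, add_zero]
        intro h
        subst h
        unfold qvar at hto
        split_ifs at hto <;> simp at hto <;> omega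
    rw [Finset.sum_congr rfl this, Finset.sum_add_distrib, sum_indicator, sum_indicator]

lemma Dm_diagonly (u : VarSet k W →₀ ℕ) (i : Fin k)
    (hs : ∀ v ∈ u.support, (v.1.1 = i ∨ v.1.2 = i) → v = vii W i) :
    Dm u (Sum.inl i) = u (vii W i) := by
  rw [Dm_apply, Finsupp.sum]
  have : ∀ v ∈ u.support,
      u v * wt v (Sum.inl i) = (if v = vii W i then u v else 0) := by
    intro v hv
    by_cases hto : v.1.1 = i ∨ v.1.2 = i
    · rcases hs v hv hto with h; subst h
      rw [wt_vii, if_pos rfl]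
      simp [Finsupp.single_apply]
    · push_neg at hto
      rw [wt_inl_ne v i hto.1 hto.2, mul_zero, if_neg (fun h => hto.1 (by rw [h]; rfl))]
  rw [Finset.sum_congr rfl this, sum_indicator]

end PrismAux

namespace PrismAux

open SimpleGraph Walk

variable {k : ℕ} {W : SimpleGraph (Fin k)}

lemma exists_leaf (H : SimpleGraph (Fin k)) (hac : H.IsAcyclic)
    {a b : Fin k} (hab : H.Adj a b) :
    ∃ i j : Fin k, H.Adj i j ∧ ∀ j', H.Adj i j' → j' = j := by
  classical
  set P : Set ℕ := {n | ∃ (x y : Fin k) (p : H.Walk x y), p.IsPath ∧ p.length = n} with hP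
  have h1 : 1 ∈ P := ⟨a, b, .cons hab .nil, by simp [hab.ne], rfl⟩
  have hbdd : ∀ n ∈ P, n < k := by
    rintro n ⟨x, y, p, hp, rfl⟩
    simpa using hp.length_lt
  obtain ⟨n, hnP, hnmax⟩ : ∃ n ∈ P, ∀ m ∈ P, m ≤ n := by
    obtain ⟨n, hn⟩ := Set.Finite.exists_maximalFor id P
      (Set.Finite.subset (Set.finite_Iio k) fun n hn => hbdd n hn) ⟨1, h1⟩
    exact ⟨n, hn.1, fun m hm => le_of_not_gt fun hlt => by
      have := hn.2 hm (le_of_lt hlt); simp at this; omega⟩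
  obtain ⟨x, y, p, hp, hlen⟩ := hnP
  have hn1 : 1 ≤ n := hnmax 1 h1
  cases p with
  | nil => simp at hlen; omega
  | @cons _ v _ h q =>
    refine ⟨x, v, h, fun j' hj' => ?_⟩
    rw [Walk.isPath_def, support_cons, List.nodup_cons, ← Walk.isPath_def] at hp
    obtain ⟨hxq, hq⟩ := hp
    by_cases hmem : j' ∈ (Walk.cons h q).support
    · rw [support_cons, List.mem_cons] at hmem
      rcases hmem with rfl | hmem
      · exact absurd rfl hj'.ne
      · by_cases hjv : j' = v
        · exact hjv
        · exfalso
          have hjp : j' ∈ (Walk.cons h q).support := by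
            rw [support_cons]; exact List.mem_cons_of_mem _ hmem
          set w1 := (Walk.cons h q).takeUntil j' hjp with hw1
          have hw1p : w1.IsPath := by
            refine Walk.IsPath.takeUntil ?_ hjp
            rw [Walk.isPath_def, support_cons, List.nodup_cons, ← Walk.isPath_def]
            exact ⟨hxq, hq⟩
          by_cases hed : s(x, j') ∈ w1.edges
          · have hed' : s(x, j') ∈ (Walk.cons h q).edges :=
              Walk.edges_takeUntil_subset _ hjp hed
            rw [edges_cons, List.mem_cons] at hed'
            rcases hed' with heq | hed'
            · rw [Sym2.eq_iff] at heq
              rcases heq with ⟨-, rfl⟩ | ⟨rfl, rfl⟩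
              · exact hjv rfl
              · exact hj'.ne rfl
            · exact hxq (Walk.snd_mem_support_of_mem_edges q (by rwa [Sym2.eq_swap] at hed'))
          · have hc : (Walk.cons hj'.symm w1).IsCycle := by
              rw [Walk.cons_isCycle_iff]
              exact ⟨hw1p, by rwa [Sym2.eq_swap]⟩
            exact hac _ hc
    · exfalso
      have hp' : (Walk.cons hj'.symm (Walk.cons h q)).IsPath := by
        rw [Walk.isPath_def, support_cons, List.nodup_cons, ← Walk.isPath_def]
        refine ⟨hmem, ?_⟩
        rw [Walk.isPath_def, support_cons, List.nodup_cons, ← Walk.isPath_def]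
        exact ⟨hxq, hq⟩
      have : (n + 1) ∈ P := ⟨j', y, _, hp', by simp [hlen]⟩
      have := hnmax _ this
      omega

/-- sum of the values of `u` and `u'` on the (a,b) off-diagonal variable, 0 if not a variable -/
noncomputable def usum (u u' : VarSet k W →₀ ℕ) (a b : Fin k) : ℕ :=
  if h : W.Adj a b then u ⟨(a, b), Or.inr h⟩ + u' ⟨(a, b), Or.inr h⟩ else 0

/-- the graph of "used" edges -/
def usedG (u u' : VarSet k W →₀ ℕ) : SimpleGraph (Fin k) where
  Adj a b := 0 < usum u u' a b + usum u u' b a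
  symm := by constructor; intro a b h; rwa [add_comm]
  loopless := by
    constructor
    intro a h
    rw [usum, dif_neg (fun hh : W.Adj a a => hh.ne rfl)] at h
    omega

lemma usedG_le (u u' : VarSet k W →₀ ℕ) : usedG u u' ≤ W := by
  intro a b h
  by_contra hW
  rw [show (usedG u u').Adj a b = (0 < usum u u' a b + usum u u' b a) from rfl] at h
  rw [usum, dif_neg hW, usum, dif_neg (fun hh : W.Adj b a => hW hh.symm)] at h
  omega

lemma eq_pvar_or_qvar {i j : Fin k} (hij : W.Adj i j) (v : VarSet k W)
    (hv : v.1 = (i, j) ∨ v.1 = (j, i)) : v = pvar hij ∨ v = qvar hij := by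
  unfold pvar qvar
  split_ifs <;> rcases hv with h | h
  · exact Or.inl (Subtype.ext h)
  · exact Or.inr (Subtype.ext h)
  · exact Or.inr (Subtype.ext h)
  · exact Or.inl (Subtype.ext h)

lemma support_touch (u u' : VarSet k W →₀ ℕ) (v : VarSet k W) (i : Fin k)
    (hv : 0 < u v + u' v) (ht : v.1.1 = i ∨ v.1.2 = i) :
    v = vii W i ∨ ∃ m, (usedG u u').Adj i m ∧ (v.1 = (i, m) ∨ v.1 = (m, i)) := by
  rcases v.2 with hd | hadj
  · left
    apply Subtype.ext
    rcases ht with h | h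
    · exact Prod.ext h (hd.symm.trans h)
    · exact Prod.ext (hd.trans h) h
  · right
    rcases ht with h | h
    · refine ⟨v.1.2, ?_, Or.inl (Prod.ext h rfl)⟩
      have hWim : W.Adj i v.1.2 := h ▸ hadj
      have hveq : (⟨(i, v.1.2), Or.inr hWim⟩ : VarSet k W) = v :=
        Subtype.ext (Prod.ext h.symm rfl)
      have e1 : u ⟨(i, v.1.2), Or.inr hWim⟩ = u v := congrArg u hveq
      have e2 : u' ⟨(i, v.1.2), Or.inr hWim⟩ = u' v := congrArg u' hveq
      show 0 < usum u u' i v.1.2 + usum u u' v.1.2 i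
      rw [usum, dif_pos hWim, e1, e2]
      omega
    · refine ⟨v.1.1, ?_, Or.inr (Prod.ext rfl h)⟩
      have hWmi : W.Adj v.1.1 i := h ▸ hadj
      have hveq : (⟨(v.1.1, i), Or.inr hWmi⟩ : VarSet k W) = v :=
        Subtype.ext (Prod.ext rfl h.symm)
      have e1 : u ⟨(v.1.1, i), Or.inr hWmi⟩ = u v := congrArg u hveq
      have e2 : u' ⟨(v.1.1, i), Or.inr hWmi⟩ = u' v := congrArg u' hveq
      show 0 < usum u u' i v.1.1 + usum u u' v.1.1 i
      rw [usum, usum, dif_pos hWmi, e1, e2]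
      omega

lemma pq_usum (u u' : VarSet k W →₀ ℕ) {i j : Fin k} (hij : W.Adj i j) :
    usum u u' i j + usum u u' j i =
      u (pvar hij) + u (qvar hij) + u' (pvar hij) + u' (qvar hij) := by
  unfold usum pvar qvar
  rw [dif_pos hij, dif_pos hij.symm]
  split_ifs <;> omega

end PrismAux

namespace PrismAux

variable {K : Type} [Field K] {k : ℕ} {W : SimpleGraph (Fin k)}

lemma addRightCancel {α : Type*} (x y z : α →₀ ℕ) (h : x + z = y + z) : x = y := by
  ext a
  have := DFunLike.congr_fun h a
  simp only [Finsupp.add_apply] at this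
  omega

lemma X_mul_X (x y : VarSet k W) :
    monomial (Finsupp.single x 1 + Finsupp.single y 1) (1 : K) = X x * X y := by
  rw [X, X, monomial_mul, one_mul]

lemma psingle {i j : Fin k} (hij : W.Adj i j) :
    Finsupp.single (pvar hij) 1 + Finsupp.single (qvar hij) 1 =
      Finsupp.single (⟨(i, j), Or.inr hij⟩ : VarSet k W) 1 +
        Finsupp.single (⟨(j, i), Or.inr hij.symm⟩ : VarSet k W) 1 := by
  unfold pvar qvar
  split_ifs
  · rfl
  · rw [add_comm]

lemma vii_ne_vii {i j : Fin k} (h : i ≠ j) : vii W i ≠ vii W j := by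
  simp [vii, Subtype.ext_iff, Prod.ext_iff, h]

lemma step {i j : Fin k} (hijW : W.Adj i j) (u u' : VarSet k W →₀ ℕ)
    (hD : Dm u = Dm u')
    (hb : 0 < u (pvar hijW)) (hc : 0 < u (qvar hijW)) (ha' : 0 < u' (vii W i))
    (ih : ∀ x y : VarSet k W →₀ ℕ, tot x + 1 = tot u → Dm x = Dm y →
      monomial x (1 : K) - monomial y 1 ∈ PG K k W) :
    monomial u (1 : K) - monomial u' 1 ∈ PG K k W := by
  set p := pvar hijW with hp
  set q := qvar hijW with hqd
  set vi := vii W i with hvi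
  set vj := vii W j with hvj
  have hpq : p ≠ q := pvar_ne_qvar hijW
  set u₀ := (u - Finsupp.single p 1) - Finsupp.single q 1 with hu₀
  have hq0 : 0 < (u - Finsupp.single p 1 : VarSet k W →₀ ℕ) q := by
    rw [Finsupp.tsub_apply, Finsupp.single_eq_of_ne' hpq]
    omega
  have h1 : u₀ + Finsupp.single q 1 = u - Finsupp.single p 1 :=
    sub_single_add _ q hq0
  have h2 : (u - Finsupp.single p 1) + Finsupp.single p 1 = u := sub_single_add u p hb
  have hu : u₀ + (Finsupp.single q 1 + Finsupp.single p 1) = u := by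
    rw [← add_assoc, h1, h2]
  set u₂ := u₀ + (Finsupp.single vi 1 + Finsupp.single vj 1) with hu₂
  have hbin : monomial (Finsupp.single q 1 + Finsupp.single p 1) (1 : K) -
      monomial (Finsupp.single vi 1 + Finsupp.single vj 1) 1 = -(fij K hijW) := by
    rw [add_comm (Finsupp.single q 1), psingle, X_mul_X, X_mul_X, fij, hvi, hvj, vii, vii]
    ring
  have hmove : monomial u (1 : K) - monomial u₂ 1 ∈ PG K k W := by
    have heq : monomial u (1 : K) - monomial u₂ 1 =
        monomial u₀ 1 * (monomial (Finsupp.single q 1 + Finsupp.single p 1) 1 -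
          monomial (Finsupp.single vi 1 + Finsupp.single vj 1) 1) := by
      rw [mul_sub, monomial_mul, monomial_mul, one_mul, hu, hu₂]
    rw [heq, hbin]
    exact Ideal.mul_mem_left _ _ (neg_mem (fij_mem hijW))
  have hD2 : Dm u₂ = Dm u := by
    rw [hu₂, ← hu, Dm_add, Dm_add, Dm_add, Dm_add, Dm_single, Dm_single, Dm_single,
      Dm_single, one_smul, one_smul, one_smul, one_smul, hvi, hvj, hp, hqd,
      wt_vii, wt_vii, wt_pvar, wt_qvar]
    abel
  have hvij : vi ≠ vj := vii_ne_vii hijW.ne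
  have h2i : 0 < u₂ vi := by
    rw [hu₂, Finsupp.add_apply, Finsupp.add_apply, Finsupp.single_eq_same,
      Finsupp.single_eq_of_ne' hvij.symm]
    omega
  set u₃ := u₂ - Finsupp.single vi 1 with hu₃
  set u₄ := u' - Finsupp.single vi 1 with hu₄
  have h3 : u₃ + Finsupp.single vi 1 = u₂ := sub_single_add _ _ h2i
  have h4 : u₄ + Finsupp.single vi 1 = u' := sub_single_add _ _ ha'
  have hD34 : Dm u₃ = Dm u₄ := by
    apply addRightCancel _ _ (wt vi)
    have e3 : Dm u₃ + wt vi = Dm u₂ := by rw [← h3, Dm_add, Dm_single, one_smul]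
    have e4 : Dm u₄ + wt vi = Dm u' := by rw [← h4, Dm_add, Dm_single, one_smul]
    rw [e3, e4, hD2, hD]
  have htot3 : tot u₃ + 1 = tot u := by
    have t1 : tot u₃ + 1 = tot u₂ := by rw [← h3, tot_add, tot_single]
    have t2 : tot u₂ = tot u₀ + 2 := by rw [hu₂, tot_add, tot_add, tot_single, tot_single]
    have t3 : tot u = tot u₀ + 2 := by rw [← hu, tot_add, tot_add, tot_single, tot_single]
    omega
  have ih34 := ih u₃ u₄ htot3 hD34
  have hfin : monomial u₂ (1 : K) - monomial u' 1 =
      (monomial u₃ 1 - monomial u₄ 1) * X vi := by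
    rw [sub_mul, X, monomial_mul, monomial_mul, one_mul, h3, h4]
  rw [← sub_add_sub_cancel (monomial u 1) (monomial u₂ 1) (monomial u' 1)]
  exact Ideal.add_mem _ hmove (hfin ▸ Ideal.mul_mem_right _ _ ih34)

end PrismAux

namespace PrismAux

variable {K : Type} [Field K] {k : ℕ} {W : SimpleGraph (Fin k)}

lemma key (htree : W.IsTree) (d : ℕ) :
    ∀ u u' : VarSet k W →₀ ℕ, tot u = d → Dm u = Dm u' →
      monomial u (1 : K) - monomial u' 1 ∈ PG K k W := by
  induction d using Nat.strong_induction_on with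
  | _ d IH =>
  intro u u' hd hD
  by_cases hshare : ∃ v, 0 < u v ∧ 0 < u' v
  · obtain ⟨v, hv, hv'⟩ := hshare
    set u₃ := u - Finsupp.single v 1 with hu₃
    set u₄ := u' - Finsupp.single v 1 with hu₄
    have h3 : u₃ + Finsupp.single v 1 = u := sub_single_add u v hv
    have h4 : u₄ + Finsupp.single v 1 = u' := sub_single_add u' v hv'
    have hD34 : Dm u₃ = Dm u₄ := by
      apply addRightCancel _ _ (wt v)
      have e3 : Dm u₃ + wt v = Dm u := by rw [← h3, Dm_add, Dm_single, one_smul]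
      have e4 : Dm u₄ + wt v = Dm u' := by rw [← h4, Dm_add, Dm_single, one_smul]
      rw [e3, e4, hD]
    have hd3 : tot u₃ + 1 = d := by rw [← hd, ← h3, tot_add, tot_single]
    have ihm := IH (tot u₃) (by omega) u₃ u₄ rfl hD34
    have heq : monomial u (1 : K) - monomial u' 1 =
        (monomial u₃ 1 - monomial u₄ 1) * X v := by
      rw [sub_mul, X, monomial_mul, monomial_mul, one_mul, h3, h4]
    rw [heq]
    exact Ideal.mul_mem_right _ _ ihm
  · have hdisj : ∀ v, u v = 0 ∨ u' v = 0 := by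
      intro v
      by_contra hcon
      push_neg at hcon
      exact hshare ⟨v, Nat.pos_of_ne_zero hcon.1, Nat.pos_of_ne_zero hcon.2⟩
    by_cases hE : ∃ a b, (usedG u u').Adj a b
    · obtain ⟨a0, b0, hab⟩ := hE
      have hac : (usedG u u').IsAcyclic := by
        intro x c hc
        exact htree.2 (c.mapLe (usedG_le u u'))
          ((SimpleGraph.Walk.mapLe_isCycle (usedG_le u u')).mpr hc)
      obtain ⟨i, j, hijH, hleaf⟩ := exists_leaf _ hac hab
      have hijW : W.Adj i j := usedG_le u u' hijH
      have hsu : ∀ v ∈ u.support, (v.1.1 = i ∨ v.1.2 = i) →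
          v = vii W i ∨ v = pvar hijW ∨ v = qvar hijW := by
        intro v hvmem ht
        have hvpos : 0 < u v + u' v := by
          have := Finsupp.mem_support_iff.mp hvmem; omega
        rcases support_touch u u' v i hvpos ht with h | ⟨m, hm, hvm⟩
        · exact Or.inl h
        · have hmj := hleaf m hm
          subst hmj
          exact Or.inr (eq_pvar_or_qvar hijW v hvm)
      have hsu' : ∀ v ∈ u'.support, (v.1.1 = i ∨ v.1.2 = i) →
          v = vii W i ∨ v = pvar hijW ∨ v = qvar hijW := by
        intro v hvmem ht
        have hvpos : 0 < u v + u' v := by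
          have := Finsupp.mem_support_iff.mp hvmem; omega
        rcases support_touch u u' v i hvpos ht with h | ⟨m, hm, hvm⟩
        · exact Or.inl h
        · have hmj := hleaf m hm
          subst hmj
          exact Or.inr (eq_pvar_or_qvar hijW v hvm)
      obtain ⟨e1l, e1r⟩ := Dm_leaf u hijW hsu
      obtain ⟨e2l, e2r⟩ := Dm_leaf u' hijW hsu'
      have hDl : Dm u (Sum.inl i) = Dm u' (Sum.inl i) := by rw [hD]
      have hDr : Dm u (Sum.inr i) = Dm u' (Sum.inr i) := by rw [hD]
      rw [e1l, e2l] at hDl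
      rw [e1r, e2r] at hDr
      have hpos : 0 < u (pvar hijW) + u (qvar hijW) + u' (pvar hijW) + u' (qvar hijW) := by
        have := hijH
        rw [show (usedG u u').Adj i j =
          (0 < usum u u' i j + usum u u' j i) from rfl, pq_usum u u' hijW] at this
        omega
      have hd1 := hdisj (vii W i)
      have hd2 := hdisj (pvar hijW)
      have hd3 := hdisj (qvar hijW)
      have hcases : (0 < u (pvar hijW) ∧ 0 < u (qvar hijW) ∧ 0 < u' (vii W i)) ∨
          (0 < u' (pvar hijW) ∧ 0 < u' (qvar hijW) ∧ 0 < u (vii W i)) := by omega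
      rcases hcases with ⟨hb, hc, ha'⟩ | ⟨hb, hc, ha'⟩
      · exact step hijW u u' hD hb hc ha' fun x y hx hDxy =>
          IH (tot x) (by omega) x y rfl hDxy
      · have := step hijW u' u hD.symm hb hc ha' fun x y hx hDxy => by
          have htot' : tot u' = tot u := by
            have t1 := tot_Dm (W := W) u
            have t2 := tot_Dm (W := W) u'
            rw [hD] at t1
            omega
          exact IH (tot x) (by omega) x y rfl hDxy
        have hneg : monomial u (1 : K) - monomial u' 1 =
            -(monomial u' 1 - monomial u 1) := by ring
        rw [hneg]
        exact neg_mem this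
    · push_neg at hE
      have huv : u = u' := by
        ext v
        have hor : u v = 0 ∧ u' v = 0 ∨ ∃ i, v = vii W i := by
          by_cases hz : 0 < u v + u' v
          · rcases support_touch u u' v v.1.1 hz (Or.inl rfl) with h | ⟨m, hm, -⟩
            · exact Or.inr ⟨v.1.1, h⟩
            · exact absurd hm (hE _ _)
          · omega
        rcases hor with ⟨h1, h2⟩ | ⟨i, rfl⟩
        · rw [h1, h2]
        · have hsl : ∀ w ∈ u.support, (w.1.1 = i ∨ w.1.2 = i) → w = vii W i := by
            intro w hwmem ht
            have hwpos : 0 < u w + u' w := by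
              have := Finsupp.mem_support_iff.mp hwmem; omega
            rcases support_touch u u' w i hwpos ht with h | ⟨m, hm, -⟩
            · exact h
            · exact absurd hm (hE _ _)
          have hsl' : ∀ w ∈ u'.support, (w.1.1 = i ∨ w.1.2 = i) → w = vii W i := by
            intro w hwmem ht
            have hwpos : 0 < u w + u' w := by
              have := Finsupp.mem_support_iff.mp hwmem; omega
            rcases support_touch u u' w i hwpos ht with h | ⟨m, hm, -⟩
            · exact h
            · exact absurd hm (hE _ _)
          calc u (vii W i) = Dm u (Sum.inl i) := (Dm_diagonly u i hsl).symm
            _ = Dm u' (Sum.inl i) := by rw [hD]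
            _ = u' (vii W i) := Dm_diagonly u' i hsl'
      rw [huv, sub_self]
      exact zero_mem _

end PrismAux

namespace PrismAux

variable {K : Type} [Field K] {k : ℕ} {W : SimpleGraph (Fin k)}

lemma PG_le_ker : PG K k W ≤ RingHom.ker (prismMap K k W).toRingHom := by
  rw [PG, Ideal.span_le]
  rintro g ⟨i, j, h, hlt, rfl⟩
  rw [SetLike.mem_coe, RingHom.mem_ker]
  show prismMap K k W (fij K h) = 0
  have hp : (⟨(i, j), Or.inr h⟩ : VarSet k W) = pvar h := by
    unfold pvar; rw [if_pos hlt]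
  have hq : (⟨(j, i), Or.inr h.symm⟩ : VarSet k W) = qvar h := by
    unfold qvar; rw [if_pos hlt]
  rw [fij, map_sub, map_mul, map_mul, hp, hq,
    show (⟨(i, i), Or.inl rfl⟩ : VarSet k W) = vii W i from rfl,
    show (⟨(j, j), Or.inl rfl⟩ : VarSet k W) = vii W j from rfl,
    prismMap_X, prismMap_X, prismMap_X, prismMap_X, monomial_mul, monomial_mul,
    wt_vii, wt_vii, wt_pvar, wt_qvar, sub_eq_zero]
  congr 1
  abel

lemma prismMap_expand (T : MvPolynomial (VarSet k W) K) :
    prismMap K k W T = ∑ u ∈ T.support, coeff u T • monomial (Dm u) (1 : K) := by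
  conv_lhs => rw [← support_sum_monomial_coeff T]
  rw [map_sum]
  refine Finset.sum_congr rfl fun u _ => ?_
  rw [show monomial u (coeff u T) = coeff u T • monomial u (1 : K) from by
    rw [smul_monomial, smul_eq_mul, mul_one], map_smul, prismMap_monomial]

end PrismAux

open PrismAux

/-- If `W` is a tree, then `P_W = I_{W*}`: the ideal `P_W` equals the kernel
of the `K`-algebra homomorphism `x_{ij} ↦ t_{p_i}t_{p_j}`, `x_{ji} ↦ t_{q_i}t_{q_j}`,
`x_{ii} ↦ t_{p_i}t_{q_i}`. -/
theorem PG_eq_toric_of_tree (K : Type) [Field K] (k : ℕ) (W : SimpleGraph (Fin k))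
    (htree : W.IsTree) :
    PG K k W = RingHom.ker (prismMap K k W).toRingHom := by
  classical
  refine le_antisymm PG_le_ker ?_
  intro f hf
  rw [RingHom.mem_ker] at hf
  have hf' : prismMap K k W f = 0 := hf
  set R : (Fin k ⊕ Fin k →₀ ℕ) → (VarSet k W →₀ ℕ) := fun dd =>
    if hh : ∃ u : VarSet k W →₀ ℕ, Dm u = dd then hh.choose else 0 with hR
  have hRs : ∀ u : VarSet k W →₀ ℕ, Dm (R (Dm u)) = Dm u := by
    intro u
    have hex : ∃ x : VarSet k W →₀ ℕ, Dm x = Dm u := ⟨u, rfl⟩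
    rw [hR]
    simp only
    rw [dif_pos hex]
    exact hex.choose_spec
  set T : MvPolynomial (VarSet k W) K :=
    ∑ u ∈ f.support, coeff u f • monomial (R (Dm u)) 1 with hT
  have hsplit : f =
      (∑ u ∈ f.support, coeff u f • (monomial u 1 - monomial (R (Dm u)) 1)) + T := by
    rw [hT, ← Finset.sum_add_distrib]
    conv_lhs => rw [← support_sum_monomial_coeff f]
    refine Finset.sum_congr rfl fun u _ => ?_
    rw [smul_sub, sub_add_cancel, smul_monomial, smul_eq_mul, mul_one]
  have hfirst :
      (∑ u ∈ f.support, coeff u f • (monomial u 1 - monomial (R (Dm u)) 1)) ∈ PG K k W := by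
    refine Submodule.sum_mem _ fun u hu => ?_
    rw [smul_eq_C_mul]
    exact Ideal.mul_mem_left _ _ (key htree (tot u) u (R (Dm u)) rfl (hRs u).symm)
  have hTker : prismMap K k W T = 0 := by
    have h1 := PG_le_ker hfirst
    rw [RingHom.mem_ker] at h1
    have h2 := congrArg (prismMap K k W) hsplit
    rw [map_add] at h2
    have h1' : prismMap K k W
        (∑ u ∈ f.support, coeff u f • (monomial u 1 - monomial (R (Dm u)) 1)) = 0 := h1
    rw [hf', h1', zero_add] at h2
    exact h2.symm
  have hTfix : ∀ m ∈ T.support, R (Dm m) = m := by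
    intro m hm
    rw [hT] at hm
    have hsub := MvPolynomial.support_sum (s := f.support)
      (f := fun u => coeff u f • monomial (R (Dm u)) (1 : K)) hm
    rw [Finset.mem_biUnion] at hsub
    obtain ⟨u, hu, hmem⟩ := hsub
    have hmem2 := MvPolynomial.support_smul hmem
    rw [support_monomial, if_neg (one_ne_zero' K)] at hmem2
    rw [Finset.mem_singleton] at hmem2
    subst hmem2
    rw [hRs u]
  have hT0 : T = 0 := by
    apply MvPolynomial.ext
    intro m
    rw [coeff_zero]
    by_cases hm : m ∈ T.support
    · have hc : coeff (Dm m) (prismMap K k W T) = coeff m T := by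
        rw [prismMap_expand, coeff_sum]
        have : ∀ u ∈ T.support,
            coeff (Dm m) (coeff u T • monomial (Dm u) (1 : K)) =
              if u = m then coeff u T else 0 := by
          intro u hu
          rw [coeff_smul, coeff_monomial]
          by_cases he : u = m
          · subst he
            rw [if_pos rfl, if_pos rfl, smul_eq_mul, mul_one]
          · rw [if_neg he, if_neg, smul_eq_mul, mul_zero]
            intro hDum
            exact he (by rw [← hTfix u hu, hDum, hTfix m hm])
        rw [Finset.sum_congr rfl this, Finset.sum_ite_eq' T.support m (fun u => coeff u T),
          if_pos hm]
      rw [hTker, coeff_zero] at hc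
      exact hc.symm
    · exact MvPolynomial.notMem_support_iff.mp hm
  rw [hsplit, hT0, add_zero]
  exact hfirst
end

section
/- Let W be a finite connected simple graph on the vertex set {1,…,k} that is not bipartite and has exactly one cycle (equivalently: W is connected, non-bipartite, and has as many edges as vertices). Then P_W = I_{W*}: under the identification x_{ij} ↔ {p_i,p_j}, x_{ji} ↔ {q_i,q_j} for each edge {i,j} of W with i<j, and x_{ii} ↔ {p_i,q_i} for each vertex i, the ideal P_W equals the kernel of the K-algebra homomorphism from S to K[t_{p_1},…,t_{p_k},t_{q_1},…,t_{q_k}] sending x_{ij} ↦ t_{p_i}t_{p_j}, x_{ji} ↦ t_{q_i}t_{q_j}, and x_{ii} ↦ t_{p_i}t_{q_i}. -/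
set_option linter.unusedSectionVars false
set_option linter.unusedVariables false


open MvPolynomial

/-! ### Graph-theoretic core -/

open Finset

lemma exists_odd_closed_walk {k : ℕ} (W : SimpleGraph (Fin k)) (hconn : W.Connected)
    (hnb : ¬ W.Colorable 2) : ∃ (v0 : Fin k) (p : W.Walk v0 v0), Odd p.length := by
  by_contra hno
  push_neg at hno
  apply hnb
  obtain ⟨v0⟩ := hconn.nonempty
  have hwalk : ∀ v, Nonempty (W.Walk v0 v) := fun v => (hconn v0 v)
  have pw : ∀ v, W.Walk v0 v := fun v => (hwalk v).some
  have hval : ∀ {u v : Fin k}, W.Adj u v →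
      ¬ (Even (pw u).length ↔ Even (pw v).length) := by
    intro u v h hiff
    have hcl := hno v0 ((pw u).append (SimpleGraph.Walk.cons h (pw v).reverse))
    rw [SimpleGraph.Walk.length_append, SimpleGraph.Walk.length_cons,
      SimpleGraph.Walk.length_reverse] at hcl
    rw [Nat.odd_iff, Nat.add_mod, Nat.add_mod ((pw v).length)] at hcl
    rw [Nat.even_iff, Nat.even_iff] at hiff
    omega
  have c : W.Coloring Bool := SimpleGraph.Coloring.mk (fun v => decide (Even (pw v).length))
    (by
      intro u v h heq
      apply hval h
      simpa using heq)
  simpa using c.colorable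

lemma incidence_ker {k : ℕ} (W : SimpleGraph (Fin k)) [DecidableRel W.Adj]
    (hconn : W.Connected) (hnb : ¬ W.Colorable 2) (hcount : W.edgeFinset.card = k)
    (S : Fin k → Fin k → ℤ) (hsymm : ∀ i j, S i j = S j i)
    (hzero : ∀ i j, ¬ W.Adj i j → S i j = 0)
    (hsum : ∀ t, ∑ j, S t j = 0) :
    ∀ i j, S i j = 0 := by
  classical
  set A : Matrix (Fin k) ↥W.edgeFinset ℚ :=
    fun t e => if t ∈ (e : Sym2 (Fin k)) then 1 else 0 with hA
  set M := A.mulVecLin with hM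
  have h1 : ∀ (i j : Fin k), W.Adj i j →
      (Pi.single i 1 + Pi.single j 1 : Fin k → ℚ) ∈ LinearMap.range M := by
    intro i j h
    refine ⟨Pi.single ⟨s(i,j), by simpa [SimpleGraph.mem_edgeFinset] using h⟩ 1, ?_⟩
    rw [hM, Matrix.mulVecLin_apply, Matrix.mulVec_single]
    funext t
    by_cases hti : t = i
    · subst hti
      simp [hA, Pi.single_apply, h.ne, Matrix.col, Matrix.transpose, Matrix.of_apply]
    · by_cases htj : t = j
      · subst htj
        simp [hA, Pi.single_apply, hti, h.ne', Matrix.col, Matrix.transpose, Matrix.of_apply]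
      · simp [hA, Pi.single_apply, hti, htj, Ne.symm hti, Ne.symm htj, Matrix.col, Matrix.transpose, Matrix.of_apply]
  have h2 : ∀ (x y : Fin k) (p : W.Walk x y),
      ((Pi.single x 1 : Fin k → ℚ) - ((-1 : ℚ)^p.length) • (Pi.single y 1 : Fin k → ℚ))
        ∈ LinearMap.range M := by
    intro x y p
    induction p with
    | nil => simp
    | @cons x' v y' h p ih =>
      have heq : ((Pi.single x' 1 : Fin k → ℚ)
            - ((-1 : ℚ)^(SimpleGraph.Walk.cons h p).length) • (Pi.single y' 1 : Fin k → ℚ))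
          = ((Pi.single x' 1 : Fin k → ℚ) + (Pi.single v 1 : Fin k → ℚ))
            - ((Pi.single v 1 : Fin k → ℚ) - ((-1 : ℚ)^p.length) • (Pi.single y' 1 : Fin k → ℚ)) := by
        rw [SimpleGraph.Walk.length_cons, pow_succ]
        module
      rw [heq]
      exact sub_mem (h1 _ _ h) ih
  obtain ⟨v0, p0, hp0⟩ := exists_odd_closed_walk W hconn hnb
  have h3 : (Pi.single v0 1 : Fin k → ℚ) ∈ LinearMap.range M := by
    have := h2 v0 v0 p0
    rw [hp0.neg_one_pow] at this
    have h2' : (Pi.single v0 1 : Fin k → ℚ) = (2⁻¹ : ℚ) •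
        ((Pi.single v0 1 : Fin k → ℚ) - (-1 : ℚ) • (Pi.single v0 1 : Fin k → ℚ)) := by
      module
    rw [h2']
    exact Submodule.smul_mem _ _ this
  have h4 : ∀ t, (Pi.single t 1 : Fin k → ℚ) ∈ LinearMap.range M := by
    intro t
    have hw := h2 t v0 (hconn t v0).some
    have : (Pi.single t 1 : Fin k → ℚ)
        = ((Pi.single t 1 : Fin k → ℚ)
            - ((-1 : ℚ)^((hconn t v0).some).length) • (Pi.single v0 1 : Fin k → ℚ))
          + ((-1 : ℚ)^((hconn t v0).some).length) • (Pi.single v0 1 : Fin k → ℚ) := by module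
    rw [this]
    exact add_mem hw (Submodule.smul_mem _ _ h3)
  have hsurj : Function.Surjective M := by
    rw [← LinearMap.range_eq_top]
    rw [eq_top_iff]
    intro f _
    have : f = ∑ t, f t • (Pi.single t 1 : Fin k → ℚ) := by
      funext j
      rw [Finset.sum_apply]
      simp [Pi.single_apply, eq_comm]
    rw [this]
    exact Submodule.sum_mem _ fun t _ => Submodule.smul_mem _ _ (h4 t)
  have hinj : Function.Injective M := by
    rw [LinearMap.injective_iff_surjective_of_finrank_eq_finrank
      (by rw [Module.finrank_fintype_fun_eq_card, Module.finrank_fintype_fun_eq_card,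
        Fintype.card_coe, hcount, Fintype.card_fin])]
    exact hsurj
  set f : ↥W.edgeFinset → ℚ :=
    fun e => Sym2.lift ⟨fun i j => (S i j : ℚ),
      fun i j => by show ((S i j : ℚ)) = ((S j i : ℚ)); exact_mod_cast hsymm i j⟩ e with hf
  have hMf : M f = 0 := by
    funext t
    rw [hM, Matrix.mulVecLin_apply]
    show ∑ e : ↥W.edgeFinset, A t e * f e = 0
    have step1 : ∑ e : ↥W.edgeFinset, A t e * f e
        = ∑ e ∈ W.edgeFinset, (if t ∈ e then
            Sym2.lift ⟨fun i j => (S i j : ℚ),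
              fun i j => by show ((S i j : ℚ)) = ((S j i : ℚ)); exact_mod_cast hsymm i j⟩ e
          else 0) := by
      rw [Finset.sum_subtype W.edgeFinset (fun _ => Iff.rfl)]
      exact Finset.sum_congr rfl fun e _ => by
        by_cases h : t ∈ (e : Sym2 (Fin k)) <;> simp [hA, hf, h]
    have step2 : W.edgeFinset.filter (fun e => t ∈ e)
        = (W.neighborFinset t).image (fun j => s(t,j)) := by
      ext e
      refine e.ind (fun a b => ?_)
      simp only [Finset.mem_filter, SimpleGraph.mem_edgeFinset, SimpleGraph.mem_edgeSet,
        Finset.mem_image, SimpleGraph.mem_neighborFinset, Sym2.mem_iff]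
      constructor
      · rintro ⟨hab, rfl | rfl⟩
        · exact ⟨b, hab, rfl⟩
        · exact ⟨a, hab.symm, Sym2.eq_swap⟩
      · rintro ⟨j, hj, hje⟩
        rw [Sym2.eq_iff] at hje
        rcases hje with ⟨rfl, rfl⟩ | ⟨rfl, rfl⟩
        · exact ⟨hj, Or.inl rfl⟩
        · exact ⟨hj.symm, Or.inr rfl⟩
    rw [step1, ← Finset.sum_filter, step2, Finset.sum_image (by
      intro x hx y hy hxy
      exact (Sym2.congr_right.mp hxy))]
    simp only [Sym2.lift_mk]
    have step3 : ∑ j ∈ W.neighborFinset t, ((S t j : ℚ)) = ∑ j, ((S t j : ℚ)) := by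
      apply Finset.sum_subset (Finset.subset_univ _)
      intro j _ hj
      rw [SimpleGraph.mem_neighborFinset] at hj
      exact_mod_cast hzero t j hj
    rw [step3]
    exact_mod_cast congrArg (fun z : ℤ => (z : ℚ)) (hsum t)
  have hf0 : f = 0 := hinj (by simpa using hMf)
  intro i j
  by_cases hadj : W.Adj i j
  · have h5 : f ⟨s(i,j), by simpa [SimpleGraph.mem_edgeFinset] using hadj⟩ = 0 := by
      rw [hf0]; rfl
    rw [hf] at h5
    simp only [Sym2.lift_mk] at h5
    exact_mod_cast h5
  · exact hzero i j hadj

/-! ### Weights -/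

section Weights

variable {k : ℕ} {W : SimpleGraph (Fin k)} [DecidableRel W.Adj]

/-- The degree vector of the image of a variable. -/
noncomputable def wgtP (p : Fin k × Fin k) : (Fin k ⊕ Fin k) →₀ ℕ :=
  if p.1 = p.2 then Finsupp.single (Sum.inl p.1) 1 + Finsupp.single (Sum.inr p.1) 1
  else if p.1 < p.2 then Finsupp.single (Sum.inl p.1) 1 + Finsupp.single (Sum.inl p.2) 1
  else Finsupp.single (Sum.inr p.1) 1 + Finsupp.single (Sum.inr p.2) 1

noncomputable def wgt (v : VarSet k W) : (Fin k ⊕ Fin k) →₀ ℕ := wgtP v.1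

/-- The multidegree of a monomial under the prism map. -/
noncomputable def Abar (m : VarSet k W →₀ ℕ) : (Fin k ⊕ Fin k) →₀ ℕ :=
  m.sum fun v n => n • wgt v

lemma Abar_add (m m' : VarSet k W →₀ ℕ) : Abar (m + m') = Abar m + Abar m' :=
  Finsupp.sum_add_index' (fun v => zero_smul ℕ _) (fun v a b => add_smul a b _)

lemma Abar_single (v : VarSet k W) (n : ℕ) : Abar (Finsupp.single v n) = n • wgt v :=
  Finsupp.sum_single_index (zero_smul _ _)

lemma Abar_apply (m : VarSet k W →₀ ℕ) (t : Fin k ⊕ Fin k) :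
    Abar m t = ∑ v : VarSet k W, m v * wgt v t := by
  classical
  rw [Abar, Finsupp.sum_apply, Finsupp.sum_fintype]
  · exact Finset.sum_congr rfl fun v _ => by simp
  · intro v; simp

end Weights

/-! ### prismMap on monomials -/

section PrismMonomial

variable (K : Type) [Field K] {k : ℕ} {W : SimpleGraph (Fin k)} [DecidableRel W.Adj]

lemma Xmul (v w : VarSet k W) : (X v * X w : MvPolynomial (VarSet k W) K)
    = monomial (Finsupp.single v 1 + Finsupp.single w 1) 1 := by
  rw [← pow_one (X v), ← pow_one (X w), X_pow_eq_monomial, X_pow_eq_monomial,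
    monomial_mul, one_mul]

lemma prismMap_X (v : VarSet k W) :
    prismMap K k W (X v) = monomial (wgt v) 1 := by
  rw [prismMap, aeval_X, wgt, wgtP]
  split_ifs with h1 h2
  · rw [← pow_one (X (Sum.inl v.1.1)), ← pow_one (X (Sum.inr v.1.1)),
      X_pow_eq_monomial, X_pow_eq_monomial, monomial_mul, one_mul]
  · rw [← pow_one (X (Sum.inl v.1.1)), ← pow_one (X (Sum.inl v.1.2)),
      X_pow_eq_monomial, X_pow_eq_monomial, monomial_mul, one_mul]
  · rw [← pow_one (X (Sum.inr v.1.1)), ← pow_one (X (Sum.inr v.1.2)),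
      X_pow_eq_monomial, X_pow_eq_monomial, monomial_mul, one_mul]

lemma prismMap_monomial (m : VarSet k W →₀ ℕ) (c : K) :
    prismMap K k W (monomial m c) = monomial (Abar m) c := by
  induction m using Finsupp.induction with
  | zero =>
    have : Abar (0 : VarSet k W →₀ ℕ) = 0 := by
      rw [Abar, Finsupp.sum_zero_index]
    rw [this]
    rw [show ((monomial (0 : VarSet k W →₀ ℕ)) c) = C c from by rw [monomial_zero']]
    rw [show ((monomial (0 : (Fin k ⊕ Fin k) →₀ ℕ)) c) = C c from by rw [monomial_zero']]
    rw [show (C c : MvPolynomial (VarSet k W) K) = algebraMap K _ c from by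
      rw [MvPolynomial.algebraMap_eq]]
    exact (prismMap K k W).commutes c
  | single_add v n m hvm hn ih =>
    have hsp : (monomial (Finsupp.single v n + m)) c
        = (monomial (Finsupp.single v n)) (1 : K) * (monomial m) c := by
      rw [monomial_mul, one_mul]
    rw [hsp, map_mul, ih]
    rw [show (monomial (Finsupp.single v n)) (1 : K) = (X v)^n from (X_pow_eq_monomial).symm]
    rw [map_pow, prismMap_X, monomial_pow, one_pow, monomial_mul, one_mul]
    rw [Abar_add, Abar_single]

end PrismMonomial

/-! ### The easy inclusion -/

section EasyIncl

variable (K : Type) [Field K] {k : ℕ} {W : SimpleGraph (Fin k)} [DecidableRel W.Adj]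

lemma wgt_balance {i j : Fin k} (h : W.Adj i j) (hlt : i < j) :
    wgt (⟨(i,j), Or.inr h⟩ : VarSet k W) + wgt (⟨(j,i), Or.inr h.symm⟩ : VarSet k W)
      = wgt (⟨(i,i), Or.inl rfl⟩ : VarSet k W) + wgt (⟨(j,j), Or.inl rfl⟩ : VarSet k W) := by
  show wgtP (i,j) + wgtP (j,i) = wgtP (i,i) + wgtP (j,j)
  rw [wgtP, wgtP, wgtP, wgtP]
  simp only []
  rw [if_neg h.ne, if_pos hlt, if_neg h.ne', if_neg (asymm hlt)]
  simp only [if_true]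
  abel

lemma PG_le_ker : PG K k W ≤ RingHom.ker (prismMap K k W).toRingHom := by
  rw [PG, Ideal.span_le]
  rintro f ⟨i, j, h, hlt, rfl⟩
  simp only [SetLike.mem_coe, RingHom.mem_ker]
  show prismMap K k W (fij K h) = 0
  rw [fij, map_sub, map_mul, map_mul, prismMap_X, prismMap_X, prismMap_X, prismMap_X,
    monomial_mul, monomial_mul, one_mul, ← wgt_balance h hlt]
  rw [show wgt (⟨(i,j), Or.inr h⟩ : VarSet k W) + wgt (⟨(j,i), Or.inr h.symm⟩ : VarSet k W)
    = wgt (⟨(j,i), Or.inr h.symm⟩ : VarSet k W) + wgt (⟨(i,j), Or.inr h⟩ : VarSet k W)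
    from add_comm _ _]
  rw [sub_self]

end EasyIncl

/-! ### The off-diagonal degree -/

section OffDeg

variable {k : ℕ} {W : SimpleGraph (Fin k)} [DecidableRel W.Adj]

noncomputable def offDeg (m : VarSet k W →₀ ℕ) : ℕ :=
  ∑ v : VarSet k W, if v.1.1 = v.1.2 then 0 else m v

lemma offDeg_add (m m' : VarSet k W →₀ ℕ) : offDeg (m + m') = offDeg m + offDeg m' := by
  rw [offDeg, offDeg, offDeg, ← Finset.sum_add_distrib]
  refine Finset.sum_congr rfl fun v _ => ?_
  split_ifs <;> simp

lemma offDeg_single (v : VarSet k W) (n : ℕ) :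
    offDeg (Finsupp.single v n) = if v.1.1 = v.1.2 then 0 else n := by
  rw [offDeg, Finset.sum_eq_single v]
  · split_ifs <;> simp
  · intro w _ hw
    have : Finsupp.single v n w = 0 := Finsupp.single_eq_of_ne' (Ne.symm hw)
    rw [this]
    split_ifs <;> rfl
  · intro h
    exact absurd (Finset.mem_univ v) h

end OffDeg

/-! ### The reduction step -/

section Reduce

variable (K : Type) [Field K] {k : ℕ} {W : SimpleGraph (Fin k)} [DecidableRel W.Adj]

lemma reduce_step {a : VarSet k W →₀ ℕ} {i j : Fin k} (hij : W.Adj i j) (hlt : i < j)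
    (hau : a ⟨(i,j), Or.inr hij⟩ ≠ 0) (had : a ⟨(j,i), Or.inr hij.symm⟩ ≠ 0) :
    ∃ a' : VarSet k W →₀ ℕ, Abar a' = Abar a ∧ offDeg a' + 2 = offDeg a ∧
      (monomial a 1 - monomial a' 1 : MvPolynomial (VarSet k W) K) ∈ PG K k W := by
  classical
  set u : VarSet k W := ⟨(i,j), Or.inr hij⟩ with hu
  set d : VarSet k W := ⟨(j,i), Or.inr hij.symm⟩ with hd
  set vii : VarSet k W := ⟨(i,i), Or.inl rfl⟩ with hvii
  set vjj : VarSet k W := ⟨(j,j), Or.inl rfl⟩ with hvjj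
  have hud : u ≠ d := by
    intro hc
    exact hlt.ne (congrArg (fun v : VarSet k W => v.1.1) hc)
  have hle : Finsupp.single u 1 + Finsupp.single d 1 ≤ a := by
    rw [Finsupp.le_def]
    intro x
    rw [Finsupp.add_apply]
    by_cases hxu : x = u
    · subst hxu
      rw [Finsupp.single_eq_same, Finsupp.single_eq_of_ne' (Ne.symm hud)]
      omega
    · by_cases hxd : x = d
      · subst hxd
        rw [Finsupp.single_eq_same, Finsupp.single_eq_of_ne' hud]
        omega
      · rw [Finsupp.single_eq_of_ne' (Ne.symm hxu), Finsupp.single_eq_of_ne' (Ne.symm hxd)]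
        omega
  set a0 := a - (Finsupp.single u 1 + Finsupp.single d 1) with ha0
  have haeq : a0 + (Finsupp.single u 1 + Finsupp.single d 1) = a := tsub_add_cancel_of_le hle
  refine ⟨a0 + (Finsupp.single vii 1 + Finsupp.single vjj 1), ?_, ?_, ?_⟩
  · rw [Abar_add, Abar_add, ← haeq, Abar_add, Abar_add, Abar_single, Abar_single,
      Abar_single, Abar_single, one_smul, one_smul, one_smul, one_smul]
    rw [show wgt vii + wgt vjj = wgt u + wgt d from (wgt_balance hij hlt).symm]
  · rw [offDeg_add, ← haeq, offDeg_add, offDeg_add, offDeg_add, offDeg_single, offDeg_single,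
      offDeg_single, offDeg_single]
    simp only [hu, hd, hvii, hvjj, if_true]
    rw [if_neg (show ¬ (i = j) from hij.ne), if_neg (show ¬ (j = i) from hij.ne')]
  · have hfij : fij K hij ∈ PG K k W := Ideal.subset_span ⟨i, j, hij, hlt, rfl⟩
    have hkey : (monomial a 1 - monomial (a0 + (Finsupp.single vii 1 + Finsupp.single vjj 1)) 1
          : MvPolynomial (VarSet k W) K)
        = monomial a0 1 * (-(fij K hij)) := by
      rw [fij, mul_neg, mul_sub, Xmul, Xmul, monomial_mul, monomial_mul, one_mul,
        neg_sub, ← haeq]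
    rw [hkey]
    exact Ideal.mul_mem_left _ _ (neg_mem hfij)

end Reduce

/-! ### Injectivity on standard monomials -/

section StandardInj

variable {k : ℕ} {W : SimpleGraph (Fin k)} [DecidableRel W.Adj]

lemma standard_inj (hconn : W.Connected) (hnb : ¬ W.Colorable 2)
    (hcount : W.edgeFinset.card = k) (a b : VarSet k W →₀ ℕ)
    (ha : ∀ (i j : Fin k) (hij : W.Adj i j), i < j →
      a ⟨(i,j), Or.inr hij⟩ = 0 ∨ a ⟨(j,i), Or.inr hij.symm⟩ = 0)
    (hb : ∀ (i j : Fin k) (hij : W.Adj i j), i < j →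
      b ⟨(i,j), Or.inr hij⟩ = 0 ∨ b ⟨(j,i), Or.inr hij.symm⟩ = 0)
    (hab : Abar a = Abar b) : a = b := by
  classical
  set δ : VarSet k W → ℤ := fun v => (a v : ℤ) - (b v : ℤ) with hδ
  have hpt : ∀ t : Fin k ⊕ Fin k, ∑ v : VarSet k W, δ v * (wgt v t : ℤ) = 0 := by
    intro t
    have h := congrArg (fun F : (Fin k ⊕ Fin k) →₀ ℕ => F t) hab
    simp only [Abar_apply] at h
    have h' : ∑ v : VarSet k W, ((a v : ℤ) * (wgt v t : ℤ))
        = ∑ v : VarSet k W, ((b v : ℤ) * (wgt v t : ℤ)) := by exact_mod_cast h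
    simp only [hδ, sub_mul]
    rw [Finset.sum_sub_distrib, h', sub_self]
  set Δ : Fin k × Fin k → ℤ :=
    fun p => if h : p.1 = p.2 ∨ W.Adj p.1 p.2 then δ ⟨p, h⟩ else 0 with hΔ
  set S : Fin k → Fin k → ℤ :=
    fun i j => if i < j then Δ (i,j) - Δ (j,i) else Δ (j,i) - Δ (i,j) with hS
  have hsymm : ∀ i j, S i j = S j i := by
    intro i j
    rcases lt_trichotomy i j with h | rfl | h
    · rw [hS]
      simp only []
      rw [if_pos h, if_neg (asymm h)]
    · rfl
    · rw [hS]
      simp only []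
      rw [if_neg (asymm h), if_pos h]
  have hzero : ∀ i j, ¬ W.Adj i j → S i j = 0 := by
    intro i j hnadj
    by_cases hij : i = j
    · subst hij
      rw [hS]
      simp only []
      rw [if_neg (lt_irrefl i), sub_self]
    · have h1 : Δ (i,j) = 0 := by
        rw [hΔ]
        exact dif_neg (by rintro (h | h); exact hij h; exact hnadj h)
      have h2 : Δ (j,i) = 0 := by
        rw [hΔ]
        exact dif_neg (by
          rintro (h | h)
          · exact hij h.symm
          · exact hnadj h.symm)
      rw [hS]
      simp only []
      split_ifs <;> rw [h1, h2, sub_self]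
  -- the bridge: row sums of S vanish
  have hbridge : ∀ t, ∑ j, S t j = 0 := by
    intro t
    set F : Fin k × Fin k → ℤ :=
      fun p => Δ p * ((wgtP p (Sum.inl t) : ℤ) - (wgtP p (Sum.inr t) : ℤ)) with hF
    have hsplit : ∑ p : Fin k × Fin k, F p
        = ∑ v : VarSet k W, δ v * ((wgt v (Sum.inl t) : ℤ) - (wgt v (Sum.inr t) : ℤ)) := by
      have hsubty : ∑ p ∈ Finset.univ.filter (fun p : Fin k × Fin k => p.1 = p.2 ∨ W.Adj p.1 p.2), F p
          = ∑ v : VarSet k W, F ↑v :=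
        Finset.sum_subtype _ (fun x => by simp) F
      have hfill : ∑ p ∈ Finset.univ.filter (fun p : Fin k × Fin k => p.1 = p.2 ∨ W.Adj p.1 p.2), F p
          = ∑ p : Fin k × Fin k, F p := by
        apply Finset.sum_subset (Finset.filter_subset _ _)
        intro p _ hp
        have hnp : ¬ (p.1 = p.2 ∨ W.Adj p.1 p.2) := by
          intro hc
          exact hp (Finset.mem_filter.mpr ⟨Finset.mem_univ _, hc⟩)
        rw [hF]
        simp only []
        rw [hΔ]
        simp only []
        rw [dif_neg hnp, zero_mul]
      rw [← hfill, hsubty]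
      refine Finset.sum_congr rfl fun v _ => ?_
      rw [hF]
      simp only []
      rw [hΔ]
      simp only []
      rw [dif_pos v.2]
      rfl
    have hsum0 : ∑ p : Fin k × Fin k, F p = 0 := by
      have e1 := hpt (Sum.inl t)
      have e2 := hpt (Sum.inr t)
      rw [hsplit]
      have : ∑ v : VarSet k W, δ v * ((wgt v (Sum.inl t) : ℤ) - (wgt v (Sum.inr t) : ℤ))
          = ∑ v : VarSet k W, δ v * (wgt v (Sum.inl t) : ℤ)
            - ∑ v : VarSet k W, δ v * (wgt v (Sum.inr t) : ℤ) := by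
        rw [← Finset.sum_sub_distrib]
        exact Finset.sum_congr rfl fun v _ => by ring
      rw [this, e1, e2, sub_self]
    have hF0 : ∀ i j : Fin k, i ≠ t → j ≠ t → F (i,j) = 0 := by
      intro i j hi hj
      have h1 : wgtP (i,j) (Sum.inl t) = 0 := by
        rw [wgtP]
        split_ifs <;> simp [Finsupp.single_apply, hi, hj]
      have h2 : wgtP (i,j) (Sum.inr t) = 0 := by
        rw [wgtP]
        split_ifs <;> simp [Finsupp.single_apply, hi, hj]
      rw [hF]
      simp only []
      rw [h1, h2]
      push_cast
      ring
    have hFtt : F (t,t) = 0 := by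
      have h1 : wgtP (t,t) (Sum.inl t) = 1 := by
        rw [wgtP]
        rw [if_pos rfl]
        simp [Finsupp.single_apply]
      have h2 : wgtP (t,t) (Sum.inr t) = 1 := by
        rw [wgtP]
        rw [if_pos rfl]
        simp [Finsupp.single_apply]
      rw [hF]
      simp only []
      rw [h1, h2]
      push_cast
      ring
    have hterm : ∀ j, F (t,j) + F (j,t) = S t j := by
      intro j
      rcases lt_trichotomy t j with h | rfl | h
      · have h1 : wgtP (t,j) (Sum.inl t) = 1 := by
          rw [wgtP, if_neg h.ne, if_pos h]
          simp [Finsupp.single_apply, h.ne, h.ne']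
        have h2 : wgtP (t,j) (Sum.inr t) = 0 := by
          rw [wgtP, if_neg h.ne, if_pos h]
          simp [Finsupp.single_apply]
        have h3 : wgtP (j,t) (Sum.inl t) = 0 := by
          rw [wgtP, if_neg h.ne', if_neg (asymm h)]
          simp [Finsupp.single_apply]
        have h4 : wgtP (j,t) (Sum.inr t) = 1 := by
          rw [wgtP, if_neg h.ne', if_neg (asymm h)]
          simp [Finsupp.single_apply, h.ne, h.ne']
        rw [hF]
        simp only []
        rw [h1, h2, h3, h4, hS]
        simp only []
        rw [if_pos h]
        push_cast
        ring
      · rw [hFtt, hS]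
        simp only []
        rw [if_neg (lt_irrefl t), sub_self]
        simp
      · have h1 : wgtP (t,j) (Sum.inl t) = 0 := by
          rw [wgtP, if_neg h.ne', if_neg (asymm h)]
          simp [Finsupp.single_apply]
        have h2 : wgtP (t,j) (Sum.inr t) = 1 := by
          rw [wgtP, if_neg h.ne', if_neg (asymm h)]
          simp [Finsupp.single_apply, h.ne, h.ne']
        have h3 : wgtP (j,t) (Sum.inl t) = 1 := by
          rw [wgtP, if_neg h.ne, if_pos h]
          simp [Finsupp.single_apply, h.ne, h.ne']
        have h4 : wgtP (j,t) (Sum.inr t) = 0 := by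
          rw [wgtP, if_neg h.ne, if_pos h]
          simp [Finsupp.single_apply]
        rw [hF]
        simp only []
        rw [h1, h2, h3, h4, hS]
        simp only []
        rw [if_neg (asymm h)]
        push_cast
        ring
    calc ∑ j, S t j = ∑ j, (F (t,j) + F (j,t)) := Finset.sum_congr rfl fun j _ => (hterm j).symm
      _ = ∑ j, F (t,j) + ∑ j, F (j,t) := Finset.sum_add_distrib
      _ = ∑ p : Fin k × Fin k, F p := by
          have hrow : ∀ i ∈ Finset.univ.erase t, ∑ j, F (i,j) = F (i,t) := by
            intro i hi
            have hit : i ≠ t := (Finset.mem_erase.mp hi).1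
            exact Finset.sum_eq_single t (fun j _ hj => hF0 i j hit hj)
              (fun h => absurd (Finset.mem_univ t) h)
          have hdecomp : ∑ x : Fin k, ∑ y : Fin k, F (x, y)
              = ∑ j, F (t,j) + ∑ i, F (i,t) := by
            rw [← Finset.sum_erase_add Finset.univ _ (Finset.mem_univ t)]
            rw [Finset.sum_congr rfl hrow,
              Finset.sum_erase (f := fun x => F (x, t)) Finset.univ hFtt]
            ring
          rw [Fintype.sum_prod_type, hdecomp]
      _ = 0 := hsum0
  have hS0 := incidence_ker W hconn hnb hcount S hsymm hzero hbridge
  -- off-diagonal entries agree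
  have hoff : ∀ (i j : Fin k) (hij : W.Adj i j), i < j →
      a ⟨(i,j), Or.inr hij⟩ = b ⟨(i,j), Or.inr hij⟩
        ∧ a ⟨(j,i), Or.inr hij.symm⟩ = b ⟨(j,i), Or.inr hij.symm⟩ := by
    intro i j hij hlt
    have hs := hS0 i j
    rw [hS] at hs
    simp only [] at hs
    rw [if_pos hlt] at hs
    have e1 : Δ (i,j) = δ ⟨(i,j), Or.inr hij⟩ := by
      rw [hΔ]
      simp only []
      rw [dif_pos (Or.inr hij)]
    have e2 : Δ (j,i) = δ ⟨(j,i), Or.inr hij.symm⟩ := by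
      rw [hΔ]
      simp only []
      rw [dif_pos (Or.inr hij.symm)]
    rw [e1, e2, hδ] at hs
    simp only [] at hs
    rcases ha i j hij hlt with h | h <;> rcases hb i j hij hlt with h' | h' <;>
      constructor <;> omega
  have hvi : ∀ v : VarSet k W, v.1.1 ≠ v.1.2 → a v = b v := by
    rintro ⟨⟨i,j⟩, hv⟩ hne
    rcases hv with h | h
    · exact absurd h hne
    · rcases lt_or_gt_of_ne hne with hlt | hgt
      · exact (hoff i j h hlt).1
      · exact (hoff j i h.symm hgt).2
  have hdiag : ∀ t : Fin k, a ⟨(t,t), Or.inl rfl⟩ = b ⟨(t,t), Or.inl rfl⟩ := by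
    intro t
    have h := hpt (Sum.inl t)
    rw [Finset.sum_eq_single (⟨(t,t), Or.inl rfl⟩ : VarSet k W)] at h
    · have hw : wgt (⟨(t,t), Or.inl rfl⟩ : VarSet k W) (Sum.inl t) = 1 := by
        rw [wgt, wgtP, if_pos rfl]
        simp [Finsupp.single_apply]
      rw [hw] at h
      simp only [hδ] at h
      omega
    · rintro ⟨⟨i,j⟩, hvp⟩ _ hv
      by_cases hij : i = j
      · subst hij
        have hit : i ≠ t := by
          rintro rfl
          exact hv rfl
        have hw : wgt (⟨(i,i), hvp⟩ : VarSet k W) (Sum.inl t) = 0 := by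
          rw [wgt, wgtP, if_pos rfl]
          simp [Finsupp.single_apply, hit]
        rw [hw]
        push_cast
        ring
      · have hz : δ ⟨(i,j), hvp⟩ = 0 := by
          rw [hδ]
          simp only []
          rw [hvi ⟨(i,j), hvp⟩ hij, sub_self]
        rw [hz, zero_mul]
    · intro hni
      exact absurd (Finset.mem_univ _) hni
  ext v
  rcases v with ⟨⟨i,j⟩, hv⟩
  by_cases hij : i = j
  · subst hij
    exact hdiag i
  · exact hvi ⟨(i,j), hv⟩ hij

end StandardInj

/-! ### The binomial lemma and the hard inclusion -/

section Hard

variable (K : Type) [Field K] {k : ℕ} {W : SimpleGraph (Fin k)} [DecidableRel W.Adj]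

lemma key_binom (hconn : W.Connected) (hnb : ¬ W.Colorable 2)
    (hcount : W.edgeFinset.card = k) (a b : VarSet k W →₀ ℕ) (hab : Abar a = Abar b) :
    (monomial a 1 - monomial b 1 : MvPolynomial (VarSet k W) K) ∈ PG K k W := by
  classical
  suffices H : ∀ (n : ℕ) (a b : VarSet k W →₀ ℕ), offDeg a + offDeg b = n → Abar a = Abar b →
      (monomial a 1 - monomial b 1 : MvPolynomial (VarSet k W) K) ∈ PG K k W from
    H _ a b rfl hab
  intro n
  induction n using Nat.strong_induction_on with
  | _ n ih =>
    intro a b hn hab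
    by_cases hA : ∃ i j : Fin k, ∃ hij : W.Adj i j, i < j ∧
        a ⟨(i,j), Or.inr hij⟩ ≠ 0 ∧ a ⟨(j,i), Or.inr hij.symm⟩ ≠ 0
    · obtain ⟨i, j, hij, hlt, hau, had⟩ := hA
      obtain ⟨a', hA1, hA2, hA3⟩ := reduce_step K hij hlt hau had
      have h4 := ih (offDeg a' + offDeg b) (by omega) a' b rfl (hA1.trans hab)
      have hsplit : (monomial a 1 - monomial b 1 : MvPolynomial (VarSet k W) K)
          = (monomial a 1 - monomial a' 1) + (monomial a' 1 - monomial b 1) := by ring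
      rw [hsplit]
      exact add_mem hA3 h4
    · by_cases hB : ∃ i j : Fin k, ∃ hij : W.Adj i j, i < j ∧
          b ⟨(i,j), Or.inr hij⟩ ≠ 0 ∧ b ⟨(j,i), Or.inr hij.symm⟩ ≠ 0
      · obtain ⟨i, j, hij, hlt, hbu, hbd⟩ := hB
        obtain ⟨b', hB1, hB2, hB3⟩ := reduce_step K hij hlt hbu hbd
        have h4 := ih (offDeg a + offDeg b') (by omega) a b' rfl (hab.trans hB1.symm)
        have hsplit : (monomial a 1 - monomial b 1 : MvPolynomial (VarSet k W) K)
            = (monomial a 1 - monomial b' 1) - (monomial b 1 - monomial b' 1) := by ring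
        rw [hsplit]
        exact sub_mem h4 hB3
      · have ha' : ∀ (i j : Fin k) (hij : W.Adj i j), i < j →
            a ⟨(i,j), Or.inr hij⟩ = 0 ∨ a ⟨(j,i), Or.inr hij.symm⟩ = 0 := by
          intro i j hij hlt
          by_contra hc
          push_neg at hc
          exact hA ⟨i, j, hij, hlt, hc.1, hc.2⟩
        have hb' : ∀ (i j : Fin k) (hij : W.Adj i j), i < j →
            b ⟨(i,j), Or.inr hij⟩ = 0 ∨ b ⟨(j,i), Or.inr hij.symm⟩ = 0 := by
          intro i j hij hlt
          by_contra hc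
          push_neg at hc
          exact hB ⟨i, j, hij, hlt, hc.1, hc.2⟩
        rw [standard_inj hconn hnb hcount a b ha' hb' hab, sub_self]
        exact zero_mem _

lemma ker_le_PG (hconn : W.Connected) (hnb : ¬ W.Colorable 2)
    (hcount : W.edgeFinset.card = k) :
    RingHom.ker (prismMap K k W).toRingHom ≤ PG K k W := by
  classical
  intro p hp
  have hp0 : prismMap K k W p = 0 := hp
  clear hp
  suffices H : ∀ (n : ℕ) (q : MvPolynomial (VarSet k W) K), q.support.card = n →
      prismMap K k W q = 0 → q ∈ PG K k W from H _ p rfl hp0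
  intro n
  induction n using Nat.strong_induction_on with
  | _ n ih =>
    intro q hcard hq
    rcases eq_or_ne q 0 with rfl | hq0
    · exact zero_mem _
    · obtain ⟨m, hm⟩ := MvPolynomial.support_nonempty.mpr hq0
      have hrepr : prismMap K k W q = ∑ m' ∈ q.support, monomial (Abar m') (coeff m' q) := by
        conv_lhs => rw [q.as_sum]
        rw [map_sum]
        exact Finset.sum_congr rfl fun m' _ => prismMap_monomial K m' _
      have hcoeff : ∑ m' ∈ q.support.filter (fun m' => Abar m' = Abar m), coeff m' q = 0 := by
        have h0 := congrArg (coeff (Abar m)) hq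
        rw [hrepr] at h0
        rw [MvPolynomial.coeff_sum] at h0
        rw [MvPolynomial.coeff_zero] at h0
        rw [← h0, Finset.sum_filter]
        refine Finset.sum_congr rfl fun m' _ => ?_
        rw [MvPolynomial.coeff_monomial]
      have hex : ∃ m' ∈ q.support, m' ≠ m ∧ Abar m' = Abar m := by
        by_contra hc
        push_neg at hc
        have hT : q.support.filter (fun m' => Abar m' = Abar m) = {m} := by
          ext x
          simp only [Finset.mem_filter, Finset.mem_singleton]
          constructor
          · rintro ⟨hxs, hxA⟩
            by_contra hxm
            exact (hc x hxs hxm) hxA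
          · rintro rfl
            exact ⟨hm, rfl⟩
        rw [hT, Finset.sum_singleton] at hcoeff
        exact (MvPolynomial.mem_support_iff.mp hm) hcoeff
      obtain ⟨m', hm's, hm'ne, hm'A⟩ := hex
      set c := coeff m q with hc
      have hbinPG : (monomial m c - monomial m' c : MvPolynomial (VarSet k W) K) ∈ PG K k W := by
        have hfact : (monomial m c - monomial m' c : MvPolynomial (VarSet k W) K)
            = C c * (monomial m 1 - monomial m' 1) := by
          rw [mul_sub, C_mul_monomial, C_mul_monomial, mul_one]
        rw [hfact]
        exact Ideal.mul_mem_left _ _ (key_binom K hconn hnb hcount m m' hm'A.symm)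
      have hbin0 : prismMap K k W (monomial m c - monomial m' c) = 0 := by
        rw [map_sub, prismMap_monomial, prismMap_monomial, hm'A, sub_self]
      set q' := q - (monomial m c - monomial m' c) with hq'
      have hq'0 : prismMap K k W q' = 0 := by
        rw [hq', map_sub, hq, hbin0, sub_zero]
      have hsub : q'.support ⊆ q.support.erase m := by
        intro x hx
        rw [MvPolynomial.mem_support_iff] at hx
        have hcx : coeff x q' = coeff x q
            - ((if m = x then c else 0) - (if m' = x then c else 0)) := by
          rw [hq', MvPolynomial.coeff_sub, MvPolynomial.coeff_sub,
            MvPolynomial.coeff_monomial, MvPolynomial.coeff_monomial]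
        rw [Finset.mem_erase]
        by_cases hxm : x = m
        · exfalso
          apply hx
          subst hxm
          rw [hcx, if_pos rfl, if_neg hm'ne, hc, sub_zero, sub_self]
        · refine ⟨hxm, ?_⟩
          by_cases hxm' : x = m'
          · subst hxm'
            exact hm's
          · rw [MvPolynomial.mem_support_iff]
            rw [hcx, if_neg (Ne.symm hxm), if_neg (Ne.symm hxm'), sub_self, sub_zero] at hx
            exact hx
      have hlt : q'.support.card < n := by
        calc q'.support.card ≤ (q.support.erase m).card := Finset.card_le_card hsub
          _ < q.support.card := Finset.card_erase_lt_of_mem hm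
          _ = n := hcard
      have hq'PG := ih _ hlt q' rfl hq'0
      have hqs : q = q' + (monomial m c - monomial m' c) := by
        rw [hq']
        ring
      rw [hqs]
      exact add_mem hq'PG hbinPG

end Hard

/-- If `W` is connected, not bipartite, and has exactly one cycle
(equivalently, as many edges as vertices), then `P_W = I_{W*}`: the ideal `P_W` equals the
kernel of the `K`-algebra homomorphism `x_{ij} ↦ t_{p_i}t_{p_j}`, `x_{ji} ↦ t_{q_i}t_{q_j}`,
`x_{ii} ↦ t_{p_i}t_{q_i}`. -/
theorem PG_eq_toric_of_unicyclic_nonbipartite (K : Type) [Field K] (k : ℕ)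
    (W : SimpleGraph (Fin k)) [DecidableRel W.Adj]
    (hconn : W.Connected) (hnb : ¬ W.Colorable 2) (hcount : W.edgeFinset.card = k) :
    PG K k W = RingHom.ker (prismMap K k W).toRingHom :=
  le_antisymm (PG_le_ker K) (ker_le_PG K hconn hnb hcount)
end
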